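/- arXiv:2601.15272 — 4 statements merged into one kernel-verified Lean document; each statement's English description precedes it below -/
import Mathlib

section
/- Product form of the (φ,φ')-deformed Lucasnomial power: for all x, y ∈ ℂ and every n ≥ 1, if {m}_{s,t} ≠ 0 for all 1 ≤ m ≤ n, then (x ⊕_{φ,φ'} y)^{(n)} = ∏_{k=0}^{n−1} (φᵏ·x + φ'ᵏ·y), and (x ⊕_{φ,φ'} y)^{(0)} = 1. -/
open scoped BigOperators

noncomputable section

/-- The Lucas sequence `{n}_{s,t}`. -/
def lucasSeq (s t : ℂ) : ℕ → ℂ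
  | 0 => 0
  | 1 => 1
  | n + 2 => s * lucasSeq s t (n + 1) + t * lucasSeq s t n

/-- The Lucastorial `{n}_{s,t}!`. -/
def lucasFact (s t : ℂ) : ℕ → ℂ
  | 0 => 1
  | n + 1 => lucasFact s t n * lucasSeq s t (n + 1)

/-- The Lucasnomial coefficient `{n choose k}_{s,t}`. -/
def lucasBinom (s t : ℂ) (n k : ℕ) : ℂ :=
  lucasFact s t n / (lucasFact s t k * lucasFact s t (n - k))

/-- The `(u,v)`-deformed Lucasnomial power `(x ⊕_{u,v} y)^{(n)}`. -/
def lucasPow (s t u v x y : ℂ) (n : ℕ) : ℂ :=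
  ∑ k ∈ Finset.range (n + 1),
    lucasBinom s t n k * u ^ ((n - k).choose 2) * v ^ (k.choose 2) * x ^ (n - k) * y ^ k

/-- The Lucas-derivative with respect to the roots `p = φ`, `q = φ'`. -/
def lucasDeriv (p q : ℂ) (f : ℂ → ℂ) (x : ℂ) : ℂ :=
  (f (p * x) - f (q * x)) / ((p - q) * x)

/-- The Lucas-derivative, extended by `0` at `0`, as an operator suitable for iteration. -/
def lucasDeriv0 (p q : ℂ) (f : ℂ → ℂ) : ℂ → ℂ :=
  fun x => if x = 0 then 0 else (f (p * x) - f (q * x)) / ((p - q) * x)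

/-- The Lucas-Pantograph exponential `exp_{s,t}(z,u)`. -/
def lucasExp (s t u z : ℂ) : ℂ :=
  ∑' n : ℕ, u ^ (n.choose 2) * z ^ n / lucasFact s t n

/-- The Lucas-Pantograph sine `sin_{s,t}(z,u)`. -/
def lucasSin (s t u z : ℂ) : ℂ :=
  ∑' n : ℕ, (-1 : ℂ) ^ n * u ^ ((2 * n + 1).choose 2) * z ^ (2 * n + 1) / lucasFact s t (2 * n + 1)

/-- The Lucas-Pantograph cosine `cos_{s,t}(z,u)`. -/
def lucasCos (s t u z : ℂ) : ℂ :=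
  ∑' n : ℕ, (-1 : ℂ) ^ n * u ^ ((2 * n).choose 2) * z ^ (2 * n) / lucasFact s t (2 * n)


private lemma lucasSeq_two_step (s t : ℂ) (n : ℕ) :
    lucasSeq s t (n + 2) = s * lucasSeq s t (n + 1) + t * lucasSeq s t n := by
  simp [lucasSeq]

private lemma lucasFact_succ (s t : ℂ) (n : ℕ) :
    lucasFact s t (n + 1) = lucasFact s t n * lucasSeq s t (n + 1) := by
  simp [lucasFact]

private lemma lucasSeq_succ_eq (s t p q : ℂ) (hsum : p + q = s) (hmul : p * q = -t)
    (k : ℕ) : lucasSeq s t (k + 1) = p ^ k + q * lucasSeq s t k := by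
  induction k using Nat.twoStepInduction with
  | zero => simp [lucasSeq]
  | one =>
    simp [lucasSeq]
    linear_combination -hsum
  | more k ih1 ih2 =>
    rw [show k + 2 + 1 = (k + 1) + 2 from rfl, lucasSeq_two_step, ih2]
    linear_combination (-(p ^ (k+1)) - q * lucasSeq s t (k+1)) * hsum
      + lucasSeq s t (k+1) * hmul

private lemma lucasSeq_add (s t p q : ℂ) (hsum : p + q = s) (hmul : p * q = -t)
    (m k : ℕ) : lucasSeq s t (k + m) = p ^ k * lucasSeq s t m + q ^ m * lucasSeq s t k := by
  induction m using Nat.twoStepInduction with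
  | zero => simp [lucasSeq]
  | one =>
    rw [lucasSeq_succ_eq s t p q hsum hmul k]
    simp [lucasSeq]
  | more m ih1 ih2 =>
    rw [show k + (m + 2) = (k + m) + 2 from by omega, lucasSeq_two_step,
      show k + m + 1 = k + (m + 1) from by omega, ih2, ih1, lucasSeq_two_step]
    linear_combination (-(q ^ (m+1)) * lucasSeq s t k) * hsum
      + q ^ m * lucasSeq s t k * hmul

private lemma lucasFact_ne (s t : ℂ) (n : ℕ)
    (hL : ∀ m, 1 ≤ m → m ≤ n → lucasSeq s t m ≠ 0) :
    ∀ m, m ≤ n → lucasFact s t m ≠ 0 := by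
  intro m
  induction m with
  | zero => intro _; simp [lucasFact]
  | succ k ih =>
    intro hm
    rw [lucasFact_succ]
    exact mul_ne_zero (ih (by omega)) (hL (k+1) (by omega) hm)

private lemma lucas_pascal (s t p q : ℂ) (hsum : p + q = s) (hmul : p * q = -t)
    (n j : ℕ) (hj : j ≤ n)
    (hL : ∀ m, 1 ≤ m → m ≤ n + 1 → lucasSeq s t m ≠ 0)
    (hF : ∀ m, m ≤ n + 1 → lucasFact s t m ≠ 0) :
    lucasBinom s t (n+1) (j+1) =
      p ^ (j+1) * (if j + 1 ≤ n then lucasBinom s t n (j+1) else 0)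
      + q ^ (n - j) * lucasBinom s t n j := by
  have hadd : lucasSeq s t (n + 1)
      = p ^ (j+1) * lucasSeq s t (n - j) + q ^ (n - j) * lucasSeq s t (j+1) := by
    rw [show n + 1 = (j + 1) + (n - j) from by omega]
    exact lucasSeq_add s t p q hsum hmul (n - j) (j + 1)
  rcases lt_or_eq_of_le hj with h | h
  · obtain ⟨a, ha⟩ : ∃ a, n - j = a + 1 := ⟨n - j - 1, by omega⟩
    have ha' : n - (j + 1) = a := by omega
    rw [if_pos (by omega : j + 1 ≤ n)]
    unfold lucasBinom
    rw [ha] at hadd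
    rw [Nat.succ_sub_succ, ha', ha]
    rw [lucasFact_succ s t n, hadd, lucasFact_succ s t a, lucasFact_succ s t j]
    have hFj : lucasFact s t j ≠ 0 := hF j (by omega)
    have hFa : lucasFact s t a ≠ 0 := hF a (by omega)
    have hLj : lucasSeq s t (j+1) ≠ 0 := hL (j+1) (by omega) (by omega)
    have hLa : lucasSeq s t (a+1) ≠ 0 := hL (a+1) (by omega) (by omega)
    field_simp
  · subst h
    rw [if_neg (by omega)]
    unfold lucasBinom
    simp only [Nat.succ_sub_succ, Nat.sub_self, lucasFact, pow_zero, mul_one]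
    rw [div_self (mul_ne_zero (hF j (by omega))
        (hL (j+1) (by omega) (by omega))),
      div_self (hF j (by omega))]
    ring

private lemma lucasPow_prod_aux (s t p q x y : ℂ) (hsum : p + q = s) (hmul : p * q = -t) :
    ∀ n : ℕ, (∀ m, 1 ≤ m → m ≤ n → lucasSeq s t m ≠ 0) →
      lucasPow s t p q x y n = ∏ k ∈ Finset.range n, (p ^ k * x + q ^ k * y) := by
  intro n
  induction n with
  | zero =>
    intro _
    simp [lucasPow, lucasBinom, lucasFact]
  | succ n ih =>
    intro hL
    have hF := lucasFact_ne s t (n+1) hL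
    have ihn := ih (fun m h1 h2 => hL m h1 (by omega))
    have hchoose : ∀ j : ℕ, (j+1).choose 2 = j + j.choose 2 := by
      intro j
      rw [show (2:ℕ) = 1 + 1 from rfl, Nat.choose_succ_succ, Nat.choose_one_right]
    have key : lucasPow s t p q x y (n+1)
        = (∑ j ∈ Finset.range (n+1),
            ((if j + 1 ≤ n then lucasBinom s t n (j+1) else 0) * p ^ ((j+1) + (n-j).choose 2)
              * q ^ ((j+1).choose 2) * x ^ (n-j) * y ^ (j+1)))
          + ((∑ j ∈ Finset.range (n+1),
            lucasBinom s t n j * p ^ ((n-j).choose 2) * q ^ (n + j.choose 2)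
              * x ^ (n-j) * y ^ (j+1))
          + lucasBinom s t (n+1) 0 * p ^ ((n+1).choose 2) * x ^ (n+1)) := by
      rw [lucasPow, Finset.sum_range_succ']
      rw [show (∑ j ∈ Finset.range (n+1),
          lucasBinom s t (n+1) (j+1) * p ^ ((n + 1 - (j+1)).choose 2)
            * q ^ ((j+1).choose 2) * x ^ (n + 1 - (j+1)) * y ^ (j+1))
        = ∑ j ∈ Finset.range (n+1),
            ((if j + 1 ≤ n then lucasBinom s t n (j+1) else 0) * p ^ ((j+1) + (n-j).choose 2)
              * q ^ ((j+1).choose 2) * x ^ (n-j) * y ^ (j+1)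
            + lucasBinom s t n j * p ^ ((n-j).choose 2) * q ^ (n + j.choose 2)
              * x ^ (n-j) * y ^ (j+1)) from ?_, Finset.sum_add_distrib]
      · simp only [Nat.sub_zero, show Nat.choose 0 2 = 0 from rfl, pow_zero, mul_one]
        ring
      · apply Finset.sum_congr rfl
        intro j hj
        rw [Finset.mem_range] at hj
        rw [Nat.succ_sub_succ, lucas_pascal s t p q hsum hmul n j (by omega) hL hF]
        rw [show n + j.choose 2 = (n - j) + (j+1).choose 2 from by
          have := hchoose j; omega]
        rw [pow_add p, pow_add q]
        ring
    rw [key]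
    have claimB : (∑ j ∈ Finset.range (n+1),
            ((if j + 1 ≤ n then lucasBinom s t n (j+1) else 0) * p ^ ((j+1) + (n-j).choose 2)
              * q ^ ((j+1).choose 2) * x ^ (n-j) * y ^ (j+1)))
          + lucasBinom s t (n+1) 0 * p ^ ((n+1).choose 2) * x ^ (n+1)
        = p ^ n * x * lucasPow s t p q x y n := by
      rw [Finset.sum_range_succ, if_neg (by omega), lucasPow, Finset.mul_sum,
        Finset.sum_range_succ']
      simp only [zero_mul, add_zero, mul_zero]
      congr 1
      · apply Finset.sum_congr rfl
        intro j hj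
        rw [Finset.mem_range] at hj
        rw [if_pos (by omega : j + 1 ≤ n)]
        have h3 : (n-j).choose 2 = (n - (j+1)) + (n - (j+1)).choose 2 := by
          rw [show n - j = n - (j+1) + 1 from by omega, hchoose]
        rw [show (j+1) + (n-j).choose 2 = n + (n - (j+1)).choose 2 from by omega,
          show n - j = n - (j+1) + 1 from by omega, pow_add p]
        ring
      · have h0 : lucasBinom s t (n+1) 0 = 1 := by
          unfold lucasBinom
          simp only [Nat.sub_zero, lucasFact, one_mul]
          exact div_self (hF (n+1) le_rfl)
        have h0' : lucasBinom s t n 0 = 1 := by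
          unfold lucasBinom
          simp only [Nat.sub_zero, lucasFact, one_mul]
          exact div_self (hF n (by omega))
        rw [h0, h0', show (n+1).choose 2 = n + n.choose 2 from by have := hchoose n; omega,
          pow_add p]
        simp only [Nat.sub_zero, show Nat.choose 0 2 = 0 from rfl, pow_zero, mul_one]
        ring
    have claimC : (∑ j ∈ Finset.range (n+1),
            lucasBinom s t n j * p ^ ((n-j).choose 2) * q ^ (n + j.choose 2)
              * x ^ (n-j) * y ^ (j+1))
        = q ^ n * y * lucasPow s t p q x y n := by
      rw [lucasPow, Finset.mul_sum]
      apply Finset.sum_congr rfl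
      intro j hj
      rw [pow_add q]
      ring
    rw [show (∑ j ∈ Finset.range (n+1),
            ((if j + 1 ≤ n then lucasBinom s t n (j+1) else 0) * p ^ ((j+1) + (n-j).choose 2)
              * q ^ ((j+1).choose 2) * x ^ (n-j) * y ^ (j+1)))
          + ((∑ j ∈ Finset.range (n+1),
            lucasBinom s t n j * p ^ ((n-j).choose 2) * q ^ (n + j.choose 2)
              * x ^ (n-j) * y ^ (j+1))
          + lucasBinom s t (n+1) 0 * p ^ ((n+1).choose 2) * x ^ (n+1))
        = ((∑ j ∈ Finset.range (n+1),
            ((if j + 1 ≤ n then lucasBinom s t n (j+1) else 0) * p ^ ((j+1) + (n-j).choose 2)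
              * q ^ ((j+1).choose 2) * x ^ (n-j) * y ^ (j+1)))
          + lucasBinom s t (n+1) 0 * p ^ ((n+1).choose 2) * x ^ (n+1))
          + (∑ j ∈ Finset.range (n+1),
            lucasBinom s t n j * p ^ ((n-j).choose 2) * q ^ (n + j.choose 2)
              * x ^ (n-j) * y ^ (j+1)) from by ring,
      claimB, claimC, ihn, Finset.prod_range_succ]
    ring

/-- Product form of the `(φ,φ')`-deformed Lucasnomial power, where `φ = (s+d)/2` and
`φ' = (s-d)/2` with `d` a square root of `s²+4t`. -/
theorem lucasPow_phi_prod (s t : ℂ) (hs : s ≠ 0) (ht : t ≠ 0)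
    (d : ℂ) (hd : d ^ 2 = s ^ 2 + 4 * t) (x y : ℂ) (n : ℕ) (hn : 1 ≤ n)
    (hL : ∀ m, 1 ≤ m → m ≤ n → lucasSeq s t m ≠ 0) :
    lucasPow s t ((s + d) / 2) ((s - d) / 2) x y n =
      ∏ k ∈ Finset.range n, (((s + d) / 2) ^ k * x + ((s - d) / 2) ^ k * y) ∧
    lucasPow s t ((s + d) / 2) ((s - d) / 2) x y 0 = 1 := by
  have hsum : (s + d) / 2 + (s - d) / 2 = s := by ring
  have hmul : (s + d) / 2 * ((s - d) / 2) = -t := by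
    linear_combination (-1/4 : ℂ) * hd
  constructor
  · exact lucasPow_prod_aux s t _ _ x y hsum hmul n hL
  · simpa using lucasPow_prod_aux s t _ _ x y hsum hmul 0 (by omega)
end
end

section
/- Iterated Lucas-derivative of the Lucas-Pantograph exponential: let a, u ∈ ℂ with u ≠ 0 and assume the series Σ_{n=0}^{∞} u^{C(n,2)}·wⁿ/{n}_{s,t}! converges absolutely for every w ∈ ℂ. Let E(z) = exp_{s,t}(az, u). Then for every k ∈ ℕ and every z ≠ 0, (D_{s,t}^{k} E)(z) = aᵏ·u^{C(k,2)}·exp_{s,t}(a·uᵏ·z, u), where D_{s,t}^{k} denotes the k-th iterate of the Lucas-derivative operator. -/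
open scoped BigOperators

noncomputable section

lemma lucasSeq_roots (s t p q : ℂ) (hsum : p + q = s) (hprod : p * q = -t) :
    ∀ n : ℕ, p ^ n - q ^ n = (p - q) * lucasSeq s t n := by
  intro n
  induction n using Nat.twoStepInduction with
  | zero => simp [lucasSeq]
  | one => simp [lucasSeq]
  | more n ih2 ih1 =>
    have : p ^ (n + 2) - q ^ (n + 2)
        = (p + q) * (p ^ (n + 1) - q ^ (n + 1)) - (p * q) * (p ^ n - q ^ n) := by ring
    rw [this, ih2, ih1, hsum, hprod]
    show _ = (p - q) * lucasSeq s t (n + 2)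
    rw [show lucasSeq s t (n + 2) = s * lucasSeq s t (n + 1) + t * lucasSeq s t n from rfl]
    ring

lemma lucasFact_ne_zero (s t : ℂ) (hL : ∀ n : ℕ, 1 ≤ n → lucasSeq s t n ≠ 0) :
    ∀ n : ℕ, lucasFact s t n ≠ 0 := by
  intro n
  induction n with
  | zero => simp [lucasFact]
  | succ n ih =>
    rw [show lucasFact s t (n + 1) = lucasFact s t n * lucasSeq s t (n + 1) from rfl]
    exact mul_ne_zero ih (hL (n + 1) (Nat.le_add_left 1 n))

lemma key_deriv (s t u : ℂ) (hL : ∀ n : ℕ, 1 ≤ n → lucasSeq s t n ≠ 0)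
    (hconv : ∀ w : ℂ, Summable fun n : ℕ => ‖u ^ (n.choose 2) * w ^ n / lucasFact s t n‖)
    (p q : ℂ) (hsum : p + q = s) (hprod : p * q = -t) (hpq : p - q ≠ 0)
    (c z : ℂ) (hz : z ≠ 0) :
    lucasDeriv0 p q (fun w => lucasExp s t u (c * w)) z = c * lucasExp s t u (c * u * z) := by
  have Sp : Summable fun n : ℕ => u ^ (n.choose 2) * (c * (p * z)) ^ n / lucasFact s t n :=
    (hconv (c * (p * z))).of_norm
  have Sq : Summable fun n : ℕ => u ^ (n.choose 2) * (c * (q * z)) ^ n / lucasFact s t n :=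
    (hconv (c * (q * z))).of_norm
  have hF := lucasFact_ne_zero s t hL
  rw [lucasDeriv0]
  simp only [if_neg hz]
  rw [lucasExp, lucasExp, ← Summable.tsum_sub Sp Sq, ← tsum_div_const]
  rw [lucasExp, ← tsum_mul_left]
  have hsummable : Summable fun n : ℕ =>
      (u ^ (n.choose 2) * (c * (p * z)) ^ n / lucasFact s t n -
        u ^ (n.choose 2) * (c * (q * z)) ^ n / lucasFact s t n) / ((p - q) * z) :=
    (Sp.sub Sq).div_const _
  rw [Summable.tsum_eq_zero_add hsummable]
  have h0 : (u ^ (Nat.choose 0 2) * (c * (p * z)) ^ 0 / lucasFact s t 0 -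
      u ^ (Nat.choose 0 2) * (c * (q * z)) ^ 0 / lucasFact s t 0) / ((p - q) * z) = 0 := by
    simp
  rw [h0, zero_add]
  apply tsum_congr
  intro n
  have hroot := lucasSeq_roots s t p q hsum hprod (n + 1)
  have hfact : lucasFact s t (n + 1) = lucasFact s t n * lucasSeq s t (n + 1) := rfl
  have hch : (n + 1).choose 2 = n + n.choose 2 := by
    rw [Nat.choose_succ_succ]
    simp [Nat.choose_one_right, Nat.add_comm]
  have hLn : lucasSeq s t (n + 1) ≠ 0 := hL (n + 1) (Nat.le_add_left 1 n)
  rw [hfact, hch, pow_add]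
  have expand : (c * (p * z)) ^ (n + 1) = c ^ (n + 1) * z ^ (n + 1) * p ^ (n + 1) := by ring
  have expand' : (c * (q * z)) ^ (n + 1) = c ^ (n + 1) * z ^ (n + 1) * q ^ (n + 1) := by ring
  rw [expand, expand']
  have : u ^ n * u ^ n.choose 2 * (c ^ (n + 1) * z ^ (n + 1) * p ^ (n + 1)) -
    u ^ n * u ^ n.choose 2 * (c ^ (n + 1) * z ^ (n + 1) * q ^ (n + 1))
    = u ^ n * u ^ n.choose 2 * (c ^ (n + 1) * z ^ (n + 1)) * (p ^ (n + 1) - q ^ (n + 1)) := by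
    ring
  rw [div_sub_div_same, this, hroot]
  rw [div_div, div_eq_iff (by
    exact mul_ne_zero (mul_ne_zero (hF n) hLn) (mul_ne_zero hpq hz))]
  field_simp [hF n]
  ring

/-- Iterated Lucas-derivative of the Lucas-Pantograph exponential, where `φ = (s+d)/2`,
`φ' = (s-d)/2` with `d` a square root of `s²+4t ≠ 0`. -/
theorem lucasDeriv_iterate_lucasExp (s t : ℂ) (hs : s ≠ 0) (ht : t ≠ 0)
    (hst : s ^ 2 + 4 * t ≠ 0) (hL : ∀ n : ℕ, 1 ≤ n → lucasSeq s t n ≠ 0)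
    (d : ℂ) (hd : d ^ 2 = s ^ 2 + 4 * t)
    (a u : ℂ) (hu : u ≠ 0)
    (hconv : ∀ w : ℂ, Summable fun n : ℕ => ‖u ^ (n.choose 2) * w ^ n / lucasFact s t n‖)
    (k : ℕ) (z : ℂ) (hz : z ≠ 0) :
    (lucasDeriv0 ((s + d) / 2) ((s - d) / 2))^[k] (fun w => lucasExp s t u (a * w)) z =
      a ^ k * u ^ (k.choose 2) * lucasExp s t u (a * u ^ k * z) := by
  set p : ℂ := (s + d) / 2 with hp
  set q : ℂ := (s - d) / 2 with hq
  have hd0 : d ≠ 0 := by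
    intro h; apply hst; rw [← hd, h]; ring
  have hsum : p + q = s := by rw [hp, hq]; ring
  have hprod : p * q = -t := by
    rw [hp, hq]
    have : (s + d) / 2 * ((s - d) / 2) = (s ^ 2 - d ^ 2) / 4 := by ring
    rw [this, hd]; ring
  have hpq : p - q ≠ 0 := by
    rw [hp, hq]
    have : (s + d) / 2 - (s - d) / 2 = d := by ring
    rw [this]; exact hd0
  have hpne : p ≠ 0 := by
    intro h; apply ht; have := hprod; rw [h, zero_mul] at this
    have := this.symm; simpa [neg_eq_zero] using this
  have hqne : q ≠ 0 := by
    intro h; apply ht; have := hprod; rw [h, mul_zero] at this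
    have := this.symm; simpa [neg_eq_zero] using this
  induction k generalizing z with
  | zero => simp
  | succ k ih =>
    rw [Function.iterate_succ_apply']
    have hIH : ∀ w : ℂ, w ≠ 0 →
        (lucasDeriv0 p q)^[k] (fun w => lucasExp s t u (a * w)) w =
          a ^ k * u ^ (k.choose 2) * lucasExp s t u (a * u ^ k * w) := fun w hw => ih w hw
    rw [lucasDeriv0]
    simp only [if_neg hz]
    rw [hIH (p * z) (mul_ne_zero hpne hz), hIH (q * z) (mul_ne_zero hqne hz)]
    have hkey := key_deriv s t u hL hconv p q hsum hprod hpq (a * u ^ k) z hz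
    rw [lucasDeriv0] at hkey
    simp only [if_neg hz] at hkey
    have harg : ∀ w : ℂ, a * u ^ k * (w) = a * u ^ k * w := fun _ => rfl
    have step : (a ^ k * u ^ (k.choose 2) * lucasExp s t u (a * u ^ k * (p * z)) -
        a ^ k * u ^ (k.choose 2) * lucasExp s t u (a * u ^ k * (q * z))) / ((p - q) * z)
        = a ^ k * u ^ (k.choose 2) *
          ((lucasExp s t u (a * u ^ k * (p * z)) - lucasExp s t u (a * u ^ k * (q * z))) /
            ((p - q) * z)) := by
      ring
    rw [step, hkey]
    have hch : (k + 1).choose 2 = k + k.choose 2 := by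
      rw [Nat.choose_succ_succ]
      simp [Nat.choose_one_right, Nat.add_comm]
    rw [hch]
    have : a * u ^ k * u * z = a * u ^ (k + 1) * z := by ring
    rw [this]
    ring
end
end

section
/- Lucas-Pantograph-Euler formulas: for x, z ∈ ℂ and u ∈ ℂ with u ≠ 0: (1) if the series defining exp_{s,t}(ix, u) converges absolutely, then exp_{s,t}(ix, u) = cos_{s,t}(x,u) + i·sin_{s,t}(x,u); (2) if the series defining exp_{s,t}(z, −u) converges absolutely, then exp_{s,t}(z, −u) = cos_{s,t}(z,u) + sin_{s,t}(z,u). -/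
open scoped BigOperators

noncomputable section

private lemma choose_two_mod_even' (k : ℕ) : (2*k).choose 2 % 2 = k % 2 := by
  induction k with
  | zero => rfl
  | succ n ih =>
    have h1 : 2*(n+1) = (2*n+1)+1 := by ring
    rw [h1, Nat.choose_succ_succ, Nat.choose_one_right, Nat.choose_succ_succ,
      Nat.choose_one_right]
    simp only [show Nat.succ 1 = 2 from rfl]
    omega

private lemma choose_two_mod_odd' (k : ℕ) : (2*k+1).choose 2 % 2 = k % 2 := by
  have := choose_two_mod_even' k
  rw [Nat.choose_succ_succ, Nat.choose_one_right]
  simp only [show Nat.succ 1 = 2 from rfl]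
  omega

private lemma neg_one_pow_mod' (m n : ℕ) (h : m % 2 = n % 2) : (-1:ℂ)^m = (-1:ℂ)^n := by
  rcases Nat.even_or_odd n with hn | hn
  · rw [hn.neg_one_pow, Even.neg_one_pow]
    rw [Nat.even_iff] at hn ⊢; omega
  · rw [hn.neg_one_pow, Odd.neg_one_pow]
    rw [Nat.odd_iff] at hn ⊢; omega

/-- Lucas-Pantograph-Euler formulas. -/
theorem lucasExp_euler (s t : ℂ) (hs : s ≠ 0) (ht : t ≠ 0)
    (hL : ∀ n : ℕ, 1 ≤ n → lucasSeq s t n ≠ 0)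
    (x z u : ℂ) (hu : u ≠ 0)
    (hconv1 : Summable fun n : ℕ =>
      ‖u ^ (n.choose 2) * (Complex.I * x) ^ n / lucasFact s t n‖)
    (hconv2 : Summable fun n : ℕ =>
      ‖(-u) ^ (n.choose 2) * z ^ n / lucasFact s t n‖) :
    lucasExp s t u (Complex.I * x) = lucasCos s t u x + Complex.I * lucasSin s t u x ∧
    lucasExp s t (-u) z = lucasCos s t u z + lucasSin s t u z := by
  have hinj_e : Function.Injective (fun k : ℕ => 2*k) := fun a b h => by
    simpa using h
  have hinj_o : Function.Injective (fun k : ℕ => 2*k+1) := fun a b h => by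
    simp only [] at h; omega
  constructor
  · set f := fun n : ℕ => u ^ (n.choose 2) * (Complex.I * x) ^ n / lucasFact s t n with hfdef
    have hf : Summable f := hconv1.of_norm
    have he : Summable fun k : ℕ => f (2*k) := hf.comp_injective hinj_e
    have ho : Summable fun k : ℕ => f (2*k+1) := hf.comp_injective hinj_o
    have key := tsum_even_add_odd he ho
    have hcos : (∑' k : ℕ, f (2*k)) = lucasCos s t u x := by
      unfold lucasCos
      apply tsum_congr; intro k
      show u ^ ((2*k).choose 2) * (Complex.I * x) ^ (2*k) / lucasFact s t (2*k) = _
      rw [mul_pow, pow_mul, Complex.I_sq]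
      ring
    have hsin : (∑' k : ℕ, f (2*k+1)) = Complex.I * lucasSin s t u x := by
      unfold lucasSin
      rw [← tsum_mul_left]
      apply tsum_congr; intro k
      show u ^ ((2*k+1).choose 2) * (Complex.I * x) ^ (2*k+1) / lucasFact s t (2*k+1) = _
      rw [mul_pow, pow_succ, pow_mul, Complex.I_sq]
      ring
    unfold lucasExp
    rw [← key, hcos, hsin]
  · set f := fun n : ℕ => (-u) ^ (n.choose 2) * z ^ n / lucasFact s t n with hfdef
    have hf : Summable f := hconv2.of_norm
    have he : Summable fun k : ℕ => f (2*k) := hf.comp_injective hinj_e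
    have ho : Summable fun k : ℕ => f (2*k+1) := hf.comp_injective hinj_o
    have key := tsum_even_add_odd he ho
    have hcos : (∑' k : ℕ, f (2*k)) = lucasCos s t u z := by
      unfold lucasCos
      apply tsum_congr; intro k
      show (-u) ^ ((2*k).choose 2) * z ^ (2*k) / lucasFact s t (2*k) = _
      rw [neg_pow, neg_one_pow_mod' _ k (choose_two_mod_even' k)]
    have hsin : (∑' k : ℕ, f (2*k+1)) = lucasSin s t u z := by
      unfold lucasSin
      apply tsum_congr; intro k
      show (-u) ^ ((2*k+1).choose 2) * z ^ (2*k+1) / lucasFact s t (2*k+1) = _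
      rw [neg_pow, neg_one_pow_mod' _ k (choose_two_mod_odd' k)]
    unfold lucasExp
    rw [← key, hcos, hsin]
end
end

section
/- Binomial Euler-type decomposition: for all x, y, u, v ∈ ℂ, if the series Σ_{n=0}^{∞} (x ⊕_{−u,−v} y)^{(n)}/{n}_{s,t}! converges absolutely, then Σ_{n=0}^{∞} (x ⊕_{−u,−v} y)^{(n)}/{n}_{s,t}! = cos_{s,t}(x ⊖_{u,v} y) + sin_{s,t}(x ⊕_{u,v} y). -/
open scoped BigOperators

noncomputable section

lemma neg_one_pow_congr_mod2 (a b : ℕ) (h : a % 2 = b % 2) : (-1 : ℂ) ^ a = (-1) ^ b := by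
  conv_lhs => rw [← Nat.div_add_mod a 2]
  conv_rhs => rw [← Nat.div_add_mod b 2]
  rw [pow_add, pow_add, pow_mul, pow_mul, neg_one_sq, one_pow, one_pow, h]

lemma choose2_parity (p : ℕ) :
    ((2 * p).choose 2) % 2 = p % 2 ∧ ((2 * p + 1).choose 2) % 2 = p % 2 := by
  induction p with
  | zero => simp
  | succ p ih =>
    have h1 : (2 * (p + 1)).choose 2 = (2 * p + 1).choose 2 + (2 * p + 1) := by
      have : 2 * (p + 1) = (2 * p + 1) + 1 := by ring
      rw [this, Nat.choose_succ_succ, Nat.choose_one_right]; ring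
    have h2 : (2 * (p + 1) + 1).choose 2 = (2 * (p + 1)).choose 2 + (2 * (p + 1)) := by
      rw [Nat.choose_succ_succ, Nat.choose_one_right]; ring
    obtain ⟨ih1, ih2⟩ := ih
    constructor <;> omega

lemma parity_even (m j k : ℕ) (h : j + k = 2 * m) :
    (j.choose 2 + k.choose 2) % 2 = (m + k) % 2 := by
  rcases Nat.even_or_odd j with ⟨p, hp⟩ | ⟨p, hp⟩
  · obtain ⟨q, hq⟩ : Even k := by
      rcases Nat.even_or_odd k with h' | ⟨q, hq⟩
      · exact h'
      · omega
    have c1 := (choose2_parity p).1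
    have c2 := (choose2_parity q).1
    have hj : j = 2 * p := by omega
    have hk : k = 2 * q := by omega
    rw [hj, hk]; omega
  · obtain ⟨q, hq⟩ : Odd k := by
      rcases Nat.even_or_odd k with ⟨q, hq⟩ | h'
      · omega
      · exact h'
    have c1 := (choose2_parity p).2
    have c2 := (choose2_parity q).2
    have hj : j = 2 * p + 1 := by omega
    rw [hj, hq]; omega

lemma parity_odd (m j k : ℕ) (h : j + k = 2 * m + 1) :
    (j.choose 2 + k.choose 2) % 2 = m % 2 := by
  rcases Nat.even_or_odd j with ⟨p, hp⟩ | ⟨p, hp⟩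
  · obtain ⟨q, hq⟩ : Odd k := by
      rcases Nat.even_or_odd k with ⟨q, hq⟩ | h'
      · omega
      · exact h'
    have c1 := (choose2_parity p).1
    have c2 := (choose2_parity q).2
    have hj : j = 2 * p := by omega
    rw [hj, hq]; omega
  · obtain ⟨q, hq⟩ : Even k := by
      rcases Nat.even_or_odd k with h' | ⟨q, hq⟩
      · exact h'
      · omega
    have c1 := (choose2_parity p).2
    have c2 := (choose2_parity q).1
    have hj : j = 2 * p + 1 := by omega
    have hk : k = 2 * q := by omega
    rw [hj, hk]; omega

lemma lucasPow_neg_even (s t u v x y : ℂ) (m : ℕ) :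
    lucasPow s t (-u) (-v) x y (2 * m) = (-1) ^ m * lucasPow s t u v x (-y) (2 * m) := by
  unfold lucasPow
  rw [Finset.mul_sum]
  refine Finset.sum_congr rfl fun k hk => ?_
  have hk' : k ≤ 2 * m := by
    simpa [Nat.lt_succ_iff] using hk
  have key : (-1 : ℂ) ^ ((2 * m - k).choose 2) * (-1) ^ (k.choose 2) = (-1) ^ m * (-1) ^ k := by
    rw [← pow_add, ← pow_add]
    exact neg_one_pow_congr_mod2 _ _ (parity_even m (2 * m - k) k (by omega))
  rw [neg_pow u, neg_pow v, neg_pow y]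
  linear_combination (lucasBinom s t (2 * m) k * u ^ ((2 * m - k).choose 2) *
    v ^ (k.choose 2) * x ^ (2 * m - k) * y ^ k) * key

lemma lucasPow_neg_odd (s t u v x y : ℂ) (m : ℕ) :
    lucasPow s t (-u) (-v) x y (2 * m + 1) = (-1) ^ m * lucasPow s t u v x y (2 * m + 1) := by
  unfold lucasPow
  rw [Finset.mul_sum]
  refine Finset.sum_congr rfl fun k hk => ?_
  have hk' : k ≤ 2 * m + 1 := by
    simpa [Nat.lt_succ_iff] using hk
  have key : (-1 : ℂ) ^ ((2 * m + 1 - k).choose 2) * (-1) ^ (k.choose 2) = (-1) ^ m := by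
    rw [← pow_add]
    exact neg_one_pow_congr_mod2 _ _ (parity_odd m (2 * m + 1 - k) k (by omega))
  rw [neg_pow u, neg_pow v]
  linear_combination (lucasBinom s t (2 * m + 1) k * u ^ ((2 * m + 1 - k).choose 2) *
    v ^ (k.choose 2) * x ^ (2 * m + 1 - k) * y ^ k) * key

/-- Binomial Euler-type decomposition. -/
theorem lucasExp_bin_decomp (s t : ℂ) (hs : s ≠ 0) (ht : t ≠ 0)
    (hL : ∀ n : ℕ, 1 ≤ n → lucasSeq s t n ≠ 0)
    (x y u v : ℂ)
    (hconv : Summable fun n : ℕ =>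
      ‖lucasPow s t (-u) (-v) x y n / lucasFact s t n‖) :
    ∑' n : ℕ, lucasPow s t (-u) (-v) x y n / lucasFact s t n =
      (∑' n : ℕ, (-1 : ℂ) ^ n * lucasPow s t u v x (-y) (2 * n) / lucasFact s t (2 * n)) +
        ∑' n : ℕ,
          (-1 : ℂ) ^ n * lucasPow s t u v x y (2 * n + 1) / lucasFact s t (2 * n + 1) := by
  set f : ℕ → ℂ := fun n => lucasPow s t (-u) (-v) x y n / lucasFact s t n with hf
  have hsum : Summable f := Summable.of_norm hconv
  have heven : Summable fun n : ℕ => f (2 * n) :=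
    hsum.comp_injective fun a b h => by omega
  have hodd : Summable fun n : ℕ => f (2 * n + 1) :=
    hsum.comp_injective fun a b h => by omega
  rw [← tsum_even_add_odd heven hodd]
  congr 1
  · refine tsum_congr fun n => ?_
    rw [hf]
    simp only
    rw [lucasPow_neg_even, mul_div_assoc]
  · refine tsum_congr fun n => ?_
    rw [hf]
    simp only
    rw [lucasPow_neg_odd, mul_div_assoc]
end
end
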